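/- For t ∈ C(C{a,b}): if some node of t is labeled by a term of kind 1, then the flattening μ(t) is of kind 1. -/
import Mathlib


namespace OmegaClone

/-- A (possibly infinite) raw tree over a ranked set `A`, with ports.
Positions are lists of child indices; a node is labeled either by a letter
`⟨k, x⟩` (a letter `x` of rank `k`, having `k` children `0,…,k-1`) or by a
port name `j ∈ ℕ` (a leaf). `none` means the position is not a node. -/
def RawTree (A : ℕ → Type) : Type :=
  List ℕ → Option ((Σ k : ℕ, A k) ⊕ ℕ)

/-- `t` is a term of rank `n` over `A` (an element of rank `n` of `CA`):
the root exists and is not a port (excluding the trivial port-tree), a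
position `w ++ [i]` is a node iff `w` is labeled by a letter of rank `> i`,
all port names are `< n`, and every port name `< n` occurs. -/
def IsTerm (A : ℕ → Type) (n : ℕ) (t : RawTree A) : Prop :=
  (∃ k x, t [] = some (Sum.inl ⟨k, x⟩)) ∧
  (∀ w i, (t (w ++ [i])).isSome ↔ ∃ k x, t w = some (Sum.inl ⟨k, x⟩) ∧ i < k) ∧
  (∀ w j, t w = some (Sum.inr j) → j < n) ∧
  (∀ j, j < n → ∃ w, t w = some (Sum.inr j))

/-- Trees whose node labels are themselves raw trees over `A`
(i.e. raw trees over the ranked set `CA`). -/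
abbrev OuterTree (A : ℕ → Type) : Type := RawTree (fun _ => RawTree A)

/-- `t ∈ C(CA)` has rank `n`: it is a term of rank `n` whose node labels are
terms of the rank given by the arity of the node. -/
def IsTerm2 (A : ℕ → Type) (n : ℕ) (t : OuterTree A) : Prop :=
  IsTerm (fun _ => RawTree A) n t ∧
  ∀ w k s, t w = some (Sum.inl ⟨k, s⟩) → IsTerm A k s

/-- Auxiliary state for computing the flattening: either a pair
(node `v` of the outer tree, position `w` inside the label of `v`),
or a port name of the outer tree. -/
def resolve (A : ℕ → Type) (t : OuterTree A) (v : List ℕ) :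
    Option ((List ℕ × List ℕ) ⊕ ℕ) :=
  match t v with
  | some (Sum.inl _) => some (Sum.inl (v, ([] : List ℕ)))
  | some (Sum.inr j) => some (Sum.inr j)
  | none => none

/-- One navigation step of the flattening: from the current state, move to
child number `i`; a port `j` occurring inside a label redirects to the
`j`-th child of the current outer node (substitution). -/
def stepF (A : ℕ → Type) (t : OuterTree A)
    (st : (List ℕ × List ℕ) ⊕ ℕ) (i : ℕ) :
    Option ((List ℕ × List ℕ) ⊕ ℕ) :=
  match st with
  | Sum.inr _ => none
  | Sum.inl (v, w) =>
    match t v with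
    | some (Sum.inl ⟨_, s⟩) =>
      match s (w ++ [i]) with
      | some (Sum.inl _) => some (Sum.inl (v, w ++ [i]))
      | some (Sum.inr j) => resolve A t (v ++ [j])
      | none => none
    | _ => none

/-- The flattening `μ : C(CA) → CA`: the label of `μ(t)` at a position `p` is
obtained by navigating through `t`, substituting (recursively) the flattened
child subtrees of each node into the ports of its label. -/
def flatten (A : ℕ → Type) (t : OuterTree A) : RawTree A :=
  fun p =>
    (p.foldl (fun ost i => ost.bind (fun st => stepF A t st i))
        (resolve A t [])).bind
      (fun st =>
        match st with
        | Sum.inl (v, w) =>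
          match t v with
          | some (Sum.inl ⟨_, s⟩) =>
            match s w with
            | some (Sum.inl x) => some (Sum.inl x)
            | _ => none
          | _ => none
        | Sum.inr j => some (Sum.inr j))

/-- The unit `η : A → CA`: a letter of rank `k` becomes the term with that
letter at the root and ports `0,…,k-1` as its children. -/
def unitRaw (A : ℕ → Type) (k : ℕ) (x : A k) : RawTree A :=
  fun p =>
    match p with
    | [] => some (Sum.inl ⟨k, x⟩)
    | [i] => if i < k then some (Sum.inr i) else none
    | _ => none

/-- Action of `C` on (rank-preserving) functions: node-wise relabeling. -/
def cmap {A B : ℕ → Type} (h : ∀ k, A k → B k) (t : RawTree A) : RawTree B :=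
  fun p => (t p).map (Sum.map (fun x => ⟨x.1, h x.1 x.2⟩) id)

/-- The subtree of `t` rooted at node `w`. -/
def subAt {A : ℕ → Type} (t : RawTree A) (w : List ℕ) : RawTree A :=
  fun u => t (w ++ u)

/-- `t` contains a port. -/
def HasPort {A : ℕ → Type} (t : RawTree A) : Prop :=
  ∃ w j, t w = some (Sum.inr j)

/-- every subtree of `t` contains a port -/
def HasPortEverywhere {A : ℕ → Type} (t : RawTree A) : Prop :=
  ∀ w, (t w).isSome → HasPort (subAt t w)

/-- some port name occurs at least twice in `t` -/
def PortTwice {A : ℕ → Type} (t : RawTree A) : Prop :=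
  ∃ w w' j, w ≠ w' ∧ t w = some (Sum.inr j) ∧ t w' = some (Sum.inr j)

/-- subtrees at distinct nodes of `t` are distinct -/
def Antiregular {A : ℕ → Type} (t : RawTree A) : Prop :=
  ∀ w w', (t w).isSome → (t w').isSome → subAt t w = subAt t w' → w = w'

/-- every node of `t` has a descendant whose subtree is antiregular -/
def DenselyAntiregular {A : ℕ → Type} (t : RawTree A) : Prop :=
  ∀ w, (t w).isSome → ∃ u, (t (w ++ u)).isSome ∧ Antiregular (subAt t (w ++ u))

/-- the ranked alphabet `{a,b}`, both letters of rank `2` -/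
inductive AB : Type | a : AB | b : AB

def abA : ℕ → Type
  | 2 => AB
  | _ => Empty

/-- kind 1: some subtree has no ports and is not densely antiregular -/
def Kind1 (s : RawTree abA) : Prop :=
  ∃ w, (s w).isSome ∧ ¬ HasPort (subAt s w) ∧ ¬ DenselyAntiregular (subAt s w)

/-- kind 2: some subtree has no ports and every portless subtree is densely antiregular -/
def Kind2 (s : RawTree abA) : Prop :=
  (∃ w, (s w).isSome ∧ ¬ HasPort (subAt s w)) ∧
  ∀ w, (s w).isSome → ¬ HasPort (subAt s w) → DenselyAntiregular (subAt s w)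

/-- kind 3: every subtree has a port and some port name is used at least twice -/
def Kind3 (s : RawTree abA) : Prop :=
  HasPortEverywhere s ∧ PortTwice s

/-- kind 4: every subtree has a port and no port name is used twice -/
def Kind4 (s : RawTree abA) : Prop :=
  HasPortEverywhere s ∧ ¬ PortTwice s

end OmegaClone

namespace OmegaClone

variable {A : ℕ → Type}

/-- The state after navigating `p` steps during flattening. -/
def stateAt (A : ℕ → Type) (t : OuterTree A) (p : List ℕ) :
    Option ((List ℕ × List ℕ) ⊕ ℕ) :=
  p.foldl (fun ost i => ost.bind (fun st => stepF A t st i)) (resolve A t [])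

lemma flatten_eq (t : OuterTree A) (p : List ℕ) :
    flatten A t p = (stateAt A t p).bind (fun st =>
      match st with
      | Sum.inl (v, w) =>
        match t v with
        | some (Sum.inl ⟨_, s⟩) =>
          match s w with
          | some (Sum.inl x) => some (Sum.inl x)
          | _ => none
        | _ => none
      | Sum.inr j => some (Sum.inr j)) := rfl

lemma stateAt_concat (t : OuterTree A) (p : List ℕ) (i : ℕ) :
    stateAt A t (p ++ [i]) =
      (stateAt A t p).bind (fun st => stepF A t st i) := by
  simp [stateAt, List.foldl_append]

/-- Navigation inside the label of the node `v`, starting from its root. -/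
lemma nav2 (t : OuterTree A) (p v : List ℕ) (k : ℕ) (s : RawTree A)
    (hs : t v = some (Sum.inl ⟨k, s⟩)) (hterm : IsTerm A k s)
    (h0 : stateAt A t p = some (Sum.inl (v, []))) :
    ∀ u, (s u).isSome →
      (∀ x, s u = some (Sum.inl x) → stateAt A t (p ++ u) = some (Sum.inl (v, u))) ∧
      (∀ j, s u = some (Sum.inr j) → stateAt A t (p ++ u) = resolve A t (v ++ [j])) := by
  intro u
  induction u using List.reverseRecOn with
  | nil =>
    intro _
    refine ⟨fun x hx => by simpa using h0, fun j hj => ?_⟩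
    obtain ⟨k', x', hx'⟩ := hterm.1
    rw [hj] at hx'; exact absurd hx' (by simp)
  | append_singleton u i ih =>
    intro hSome
    obtain ⟨k', x', hx', hik⟩ := (hterm.2.1 u i).mp hSome
    have hu : stateAt A t (p ++ u) = some (Sum.inl (v, u)) :=
      (ih (by rw [hx']; rfl)).1 _ hx'
    have hstep : stateAt A t (p ++ (u ++ [i])) =
        stepF A t (Sum.inl (v, u)) i := by
      rw [← List.append_assoc, stateAt_concat, hu]; rfl
    constructor
    · intro x hx
      rw [hstep]; simp [stepF, hs, hx]
    · intro j hj
      rw [hstep]; simp [stepF, hs, hj]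

/-- Navigation under a portless subtree of a label never leaves the label. -/
lemma nav1 (t : OuterTree A) (p v w0 : List ℕ) (k : ℕ) (s : RawTree A)
    (hs : t v = some (Sum.inl ⟨k, s⟩)) (hterm : IsTerm A k s)
    (h0 : stateAt A t p = some (Sum.inl (v, w0)))
    (hx0 : (s w0).isSome)
    (hnp : ¬ HasPort (subAt s w0)) :
    ∀ u, stateAt A t (p ++ u) =
      (if (s (w0 ++ u)).isSome then some (Sum.inl (v, w0 ++ u)) else none) := by
  intro u
  induction u using List.reverseRecOn with
  | nil => simpa [hx0] using h0
  | append_singleton u i ih =>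
    have hstep : stateAt A t (p ++ (u ++ [i])) =
        (stateAt A t (p ++ u)).bind (fun st => stepF A t st i) := by
      rw [← List.append_assoc, stateAt_concat]
    by_cases hc : (s (w0 ++ u)).isSome
    · rw [hstep, ih, if_pos hc]
      cases hval : s ((w0 ++ u) ++ [i]) with
      | none =>
        rw [if_neg]
        · simp [stepF, hs, ← List.append_assoc, hval]
        · rw [← List.append_assoc, hval]; simp
      | some val =>
        cases val with
        | inl x =>
          rw [if_pos (by rw [← List.append_assoc, hval]; rfl)]
          simp [stepF, hs, ← List.append_assoc, hval]
        | inr j =>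
          exact absurd ⟨u ++ [i], j, by simpa [subAt, List.append_assoc] using hval⟩ hnp
    · have hnone : s (w0 ++ (u ++ [i])) = none := by
        by_contra hne
        have hS : (s ((w0 ++ u) ++ [i])).isSome := by
          rw [List.append_assoc]
          cases hv : s (w0 ++ (u ++ [i])) <;> simp_all
        obtain ⟨k', x', hx', _⟩ := (hterm.2.1 (w0 ++ u) i).mp hS
        rw [hx'] at hc; simp at hc
      rw [hstep, ih, if_neg hc, if_neg (by rw [hnone]; simp)]
      rfl

/-- Every letter-labeled node of the outer tree is reachable. -/
lemma reach (n : ℕ) (t : OuterTree A) (ht : IsTerm2 A n t) :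
    ∀ (v : List ℕ) (k : ℕ) (s : RawTree A), t v = some (Sum.inl ⟨k, s⟩) →
      ∃ p, stateAt A t p = some (Sum.inl (v, [])) := by
  intro v
  induction v using List.reverseRecOn with
  | nil =>
    intro k s hs
    exact ⟨[], by simp [stateAt, resolve, hs]⟩
  | append_singleton v j ih =>
    intro k s hs
    have hsome : (t (v ++ [j])).isSome := by rw [hs]; rfl
    obtain ⟨k', s', hv, hj⟩ := (ht.1.2.1 v j).mp hsome
    obtain ⟨p, hp⟩ := ih k' s' hv
    have hterm' := ht.2 v k' s' hv
    obtain ⟨w', hw'⟩ := hterm'.2.2.2 j hj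
    have hnav := (nav2 t p v k' s' hv hterm' hp w' (by rw [hw']; rfl)).2 j hw'
    exact ⟨p ++ w', by rw [hnav]; simp [resolve, hs]⟩

/-- Corollary, case (a): if some node of `t` is labeled by a
term of kind 1, then `μ(t)` is of kind 1. -/
theorem flatten_kind1
    (n : ℕ) (t : OuterTree abA) (ht : IsTerm2 abA n t)
    (h : ∃ (v : List ℕ) (k : ℕ) (r : RawTree abA),
        t v = some (Sum.inl ⟨k, r⟩) ∧ Kind1 r) :
    Kind1 (flatten abA t) := by
  obtain ⟨v, k, r, htv, hK1⟩ := h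
  obtain ⟨w, hwS, hnp, hnda⟩ := hK1
  have hterm : IsTerm abA k r := ht.2 v k r htv
  -- r w is a letter
  have hrw : ∃ x, r w = some (Sum.inl x) := by
    cases hval : r w with
    | none => rw [hval] at hwS; simp at hwS
    | some val =>
      cases val with
      | inl x => exact ⟨x, rfl⟩
      | inr j => exact absurd ⟨[], j, by simpa [subAt] using hval⟩ hnp
  obtain ⟨x0, hx0⟩ := hrw
  obtain ⟨p0, hp0⟩ := reach n t ht v k r htv
  have hpw : stateAt abA t (p0 ++ w) = some (Sum.inl (v, w)) :=
    (nav2 t p0 v k r htv hterm hp0 w (by rw [hx0]; rfl)).1 _ hx0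
  set p := p0 ++ w with hp
  have hnav := nav1 t p v w k r htv hterm hpw (by rw [hx0]; rfl) hnp
  -- the flattening agrees with subAt r w below p
  have hsub : subAt (flatten abA t) p = subAt r w := by
    funext u
    show flatten abA t (p ++ u) = r (w ++ u)
    rw [flatten_eq, hnav u]
    cases hval : r (w ++ u) with
    | none => rw [if_neg (by simp)]; rfl
    | some val =>
      cases val with
      | inl x =>
        simp [htv, hval]
      | inr j => exact absurd ⟨u, j, by simpa [subAt] using hval⟩ hnp
  refine ⟨p, ?_, ?_, ?_⟩
  · have : flatten abA t (p ++ []) = r (w ++ []) := congrFun hsub []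
    simp only [List.append_nil] at this
    rw [this, hx0]; rfl
  · rw [hsub]; exact hnp
  · rw [hsub]; exact hnda

end OmegaClone
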